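/- A differential operator S = Σ_{t=0}^{T} p_t ∂^t with polynomial coefficients satisfies E[Sf(N)] = 0 for all polynomials f (where N is standard Gaussian) if and only if p_0 = - Σ_{t=1}^{T} δ^t p_t, where δ is the adjoint operator δg(x) = x g(x) - g'(x) and δ^t denotes its t-fold iteration. -/

import Mathlib

open MeasureTheory Polynomial

/-- Density of the standard Gaussian distribution. -/
noncomputable def gaussDensity (x : ℝ) : ℝ := Real.exp (-x ^ 2 / 2) / Real.sqrt (2 * Real.pi)

/-- The adjoint (divergence) operator `δ q = x q - q'` on polynomials. -/
noncomputable def deltaOp (q : Polynomial ℝ) : Polynomial ℝ := X * q - derivative q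

open Real Filter in
lemma gaussDensity_pos (x : ℝ) : 0 < gaussDensity x :=
  div_pos (Real.exp_pos _) (Real.sqrt_pos.2 (by positivity))

open Real Filter in
lemma hasDerivAt_gaussDensity (x : ℝ) :
    HasDerivAt gaussDensity (-x * gaussDensity x) x := by
  have h1 : HasDerivAt (fun x : ℝ => -x ^ 2 / 2) (-x) x := by
    have := (hasDerivAt_pow 2 x).neg.div_const 2
    refine this.congr_deriv ?_
    ring
  have h2 : HasDerivAt (fun x : ℝ => Real.exp (-x ^ 2 / 2))
      (Real.exp (-x ^ 2 / 2) * (-x)) x := h1.exp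
  have := h2.div_const (Real.sqrt (2 * Real.pi))
  refine this.congr_deriv ?_
  unfold gaussDensity
  ring

open Real Filter in
lemma continuous_pow_exp (n : ℕ) :
    Continuous fun x : ℝ => x ^ n * Real.exp (-x ^ 2 / 2) :=
  (continuous_pow n).mul (Real.continuous_exp.comp ((continuous_pow 2).neg.div_const 2))

open Real Filter in
lemma integrable_pow_exp (n : ℕ) :
    Integrable fun x : ℝ => x ^ n * Real.exp (-x ^ 2 / 2) := by
  have hdom : Integrable fun x : ℝ =>
      ((n.factorial : ℝ) * Real.exp 1) * Real.exp (-(1/4 : ℝ) * x ^ 2) :=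
    (integrable_exp_neg_mul_sq (by norm_num : (0:ℝ) < 1/4)).const_mul _
  refine hdom.mono' (continuous_pow_exp n).aestronglyMeasurable ?_
  filter_upwards with x
  have h1 : |x| ^ n ≤ (n.factorial : ℝ) * Real.exp |x| := by
    have h := Real.pow_div_factorial_le_exp |x| (abs_nonneg x) n
    rw [div_le_iff₀ (by positivity)] at h
    linarith
  have h2 : Real.exp |x| * Real.exp (-x ^ 2 / 2) ≤ Real.exp 1 * Real.exp (-(1/4 : ℝ) * x ^ 2) := by
    rw [← Real.exp_add, ← Real.exp_add]
    apply Real.exp_le_exp.2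
    nlinarith [sq_nonneg (|x| - 2), sq_abs x]
  have hnn : (0:ℝ) ≤ Real.exp (-x ^ 2 / 2) := (Real.exp_pos _).le
  calc ‖x ^ n * Real.exp (-x ^ 2 / 2)‖
      = |x| ^ n * Real.exp (-x ^ 2 / 2) := by
        rw [norm_mul, norm_pow, Real.norm_eq_abs, Real.norm_eq_abs, Real.abs_exp]
    _ ≤ ((n.factorial : ℝ) * Real.exp |x|) * Real.exp (-x ^ 2 / 2) :=
        mul_le_mul_of_nonneg_right h1 hnn
    _ = (n.factorial : ℝ) * (Real.exp |x| * Real.exp (-x ^ 2 / 2)) := by ring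
    _ ≤ (n.factorial : ℝ) * (Real.exp 1 * Real.exp (-(1/4 : ℝ) * x ^ 2)) :=
        mul_le_mul_of_nonneg_left h2 (by positivity)
    _ = ((n.factorial : ℝ) * Real.exp 1) * Real.exp (-(1/4 : ℝ) * x ^ 2) := by ring

open Real Filter in
lemma integrable_poly_gauss (P : Polynomial ℝ) :
    Integrable fun x : ℝ => P.eval x * gaussDensity x := by
  have : Integrable fun x : ℝ => ∑ i ∈ Finset.range (P.natDegree + 1),
      (P.coeff i * (x ^ i * Real.exp (-x ^ 2 / 2))) * (Real.sqrt (2 * Real.pi))⁻¹ := by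
    apply integrable_finset_sum
    intro i _
    exact (((integrable_pow_exp i).const_mul (P.coeff i)).mul_const _)
  refine this.congr (Filter.Eventually.of_forall fun x => ?_)
  show _ = P.eval x * gaussDensity x
  rw [Polynomial.eval_eq_sum_range, Finset.sum_mul]
  unfold gaussDensity
  refine Finset.sum_congr rfl fun i _ => ?_
  rw [div_eq_mul_inv]
  ring

open Real Filter in
lemma tendsto_poly_gauss (P : Polynomial ℝ) :
    Tendsto (fun x : ℝ => P.eval x * gaussDensity x) (cocompact ℝ) (nhds 0) := by
  have hb : Tendsto (fun x : ℝ => ∑ i ∈ Finset.range (P.natDegree + 1),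
      |P.coeff i| * (|x| ^ (i : ℝ) * Real.exp (-(1/2 : ℝ) * x ^ 2)) * (Real.sqrt (2 * Real.pi))⁻¹)
      (cocompact ℝ) (nhds 0) := by
    have : ∀ i ∈ Finset.range (P.natDegree + 1),
        Tendsto (fun x : ℝ => |P.coeff i| * (|x| ^ (i : ℝ) * Real.exp (-(1/2 : ℝ) * x ^ 2))
          * (Real.sqrt (2 * Real.pi))⁻¹) (cocompact ℝ) (nhds 0) := by
      intro i _
      have := ((tendsto_rpow_abs_mul_exp_neg_mul_sq_cocompact
        (by norm_num : (0:ℝ) < 1/2) (i : ℝ)).const_mul |P.coeff i|).mul_const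
        (Real.sqrt (2 * Real.pi))⁻¹
      simpa using this
    simpa using tendsto_finset_sum _ this
  apply squeeze_zero_norm _ hb
  intro x
  have habs : |P.eval x| ≤ ∑ i ∈ Finset.range (P.natDegree + 1), |P.coeff i| * |x| ^ i := by
    rw [Polynomial.eval_eq_sum_range]
    refine (Finset.abs_sum_le_sum_abs _ _).trans ?_
    apply Finset.sum_le_sum
    intro i _
    rw [abs_mul, abs_pow]
  have hg : gaussDensity x = Real.exp (-(1/2 : ℝ) * x ^ 2) * (Real.sqrt (2 * Real.pi))⁻¹ := by
    unfold gaussDensity; rw [div_eq_mul_inv]; ring_nf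
  rw [Real.norm_eq_abs, abs_mul, abs_of_pos (gaussDensity_pos x), hg]
  calc |P.eval x| * (Real.exp (-(1/2:ℝ) * x ^ 2) * (Real.sqrt (2 * Real.pi))⁻¹)
      ≤ (∑ i ∈ Finset.range (P.natDegree + 1), |P.coeff i| * |x| ^ i)
        * (Real.exp (-(1/2:ℝ) * x ^ 2) * (Real.sqrt (2 * Real.pi))⁻¹) := by
        apply mul_le_mul_of_nonneg_right habs
        positivity
    _ = ∑ i ∈ Finset.range (P.natDegree + 1),
        |P.coeff i| * (|x| ^ (i : ℝ) * Real.exp (-(1/2:ℝ) * x ^ 2))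
          * (Real.sqrt (2 * Real.pi))⁻¹ := by
        rw [Finset.sum_mul]
        refine Finset.sum_congr rfl fun i _ => ?_
        rw [Real.rpow_natCast]
        ring

open Real Filter in
lemma integral_deltaOp_gauss (r : Polynomial ℝ) :
    ∫ x : ℝ, (deltaOp r).eval x * gaussDensity x = 0 := by
  have hderiv : ∀ x : ℝ, HasDerivAt (fun x => -(r.eval x * gaussDensity x))
      ((deltaOp r).eval x * gaussDensity x) x := by
    intro x
    have := ((r.hasDerivAt x).mul (hasDerivAt_gaussDensity x)).neg
    refine this.congr_deriv ?_
    simp only [deltaOp, eval_sub, eval_mul, eval_X]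
    ring
  have htop : Tendsto (fun x : ℝ => -(r.eval x * gaussDensity x)) atTop (nhds 0) := by
    have := ((tendsto_poly_gauss r).mono_left _root_.atTop_le_cocompact).neg
    simpa using this
  have hbot : Tendsto (fun x : ℝ => -(r.eval x * gaussDensity x)) atBot (nhds 0) := by
    have := ((tendsto_poly_gauss r).mono_left _root_.atBot_le_cocompact).neg
    simpa using this
  have := integral_of_hasDerivAt_of_tendsto hderiv (integrable_poly_gauss (deltaOp r)) hbot htop
  simpa using this

open Real Filter in
lemma ibp (q f : Polynomial ℝ) :
    ∫ x : ℝ, (q * derivative f).eval x * gaussDensity x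
      = ∫ x : ℝ, (deltaOp q * f).eval x * gaussDensity x := by
  have hd : deltaOp (q * f) = deltaOp q * f - q * derivative f := by
    simp only [deltaOp, derivative_mul]
    ring
  have h0 := integral_deltaOp_gauss (q * f)
  rw [hd] at h0
  have hsub : ∀ x : ℝ, (deltaOp q * f - q * derivative f).eval x * gaussDensity x
      = (deltaOp q * f).eval x * gaussDensity x - (q * derivative f).eval x * gaussDensity x := by
    intro x; simp [sub_mul]
  rw [show (fun x : ℝ => (deltaOp q * f - q * derivative f).eval x * gaussDensity x) =
      (fun x : ℝ => (deltaOp q * f).eval x * gaussDensity x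
        - (q * derivative f).eval x * gaussDensity x) from funext hsub] at h0
  rw [integral_sub (integrable_poly_gauss _) (integrable_poly_gauss _)] at h0
  linarith

open Real Filter in
lemma ibp_iter (t : ℕ) (q f : Polynomial ℝ) :
    ∫ x : ℝ, (q * derivative^[t] f).eval x * gaussDensity x
      = ∫ x : ℝ, (deltaOp^[t] q * f).eval x * gaussDensity x := by
  induction t generalizing f with
  | zero => simp
  | succ t ih =>
    rw [Function.iterate_succ_apply, Function.iterate_succ_apply']
    rw [ih (derivative f)]
    exact ibp _ f

open Real Filter in
lemma key_transform (T : ℕ) (p : ℕ → Polynomial ℝ) (f : Polynomial ℝ) :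
    ∫ x : ℝ, (∑ t ∈ Finset.range (T + 1),
        (p t).eval x * ((derivative^[t] f).eval x)) * gaussDensity x
      = ∫ x : ℝ, ((∑ t ∈ Finset.range (T + 1), deltaOp^[t] (p t)) * f).eval x * gaussDensity x := by
  have h1 : (fun x : ℝ => (∑ t ∈ Finset.range (T + 1),
      (p t).eval x * ((derivative^[t] f).eval x)) * gaussDensity x)
      = fun x : ℝ => ∑ t ∈ Finset.range (T + 1),
        (p t * derivative^[t] f).eval x * gaussDensity x := by
    funext x
    rw [Finset.sum_mul]
    simp [eval_mul]
  rw [h1, integral_finset_sum _ (fun t _ => integrable_poly_gauss _)]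
  have h2 : ∀ t ∈ Finset.range (T + 1),
      ∫ x : ℝ, (p t * derivative^[t] f).eval x * gaussDensity x
        = ∫ x : ℝ, (deltaOp^[t] (p t) * f).eval x * gaussDensity x :=
    fun t _ => ibp_iter t (p t) f
  rw [Finset.sum_congr rfl h2, ← integral_finset_sum _ (fun t _ => integrable_poly_gauss _)]
  congr 1
  funext x
  rw [← Finset.sum_mul, Finset.sum_mul]
  simp [eval_finset_sum, Finset.sum_mul]

open Real Filter in
lemma poly_zero_of_integrals (Q : Polynomial ℝ)
    (h : ∀ f : Polynomial ℝ, ∫ x : ℝ, (Q * f).eval x * gaussDensity x = 0) : Q = 0 := by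
  have h0 := h Q
  have hnn : 0 ≤ fun x : ℝ => (Q * Q).eval x * gaussDensity x := by
    intro x
    simp only [eval_mul, Pi.zero_apply]
    have := (gaussDensity_pos x).le
    nlinarith [sq_nonneg (Q.eval x)]
  have hae := (integral_eq_zero_iff_of_nonneg hnn (integrable_poly_gauss (Q * Q))).1 h0
  have hcont : Continuous fun x : ℝ => (Q * Q).eval x * gaussDensity x := by
    apply Continuous.mul
    · exact Polynomial.continuous _
    · unfold gaussDensity
      exact (Real.continuous_exp.comp ((continuous_pow 2).neg.div_const 2)).div_const _
  have heq : (fun x : ℝ => (Q * Q).eval x * gaussDensity x) = 0 :=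
    (Continuous.ae_eq_iff_eq volume hcont continuous_const).1 hae
  apply Polynomial.funext
  intro x
  have hx := congrFun heq x
  simp only [eval_mul, Pi.zero_apply] at hx
  have := (gaussDensity_pos x).ne'
  have h2 : Q.eval x * Q.eval x = 0 := by
    rcases mul_eq_zero.1 hx with h | h
    · exact h
    · exact absurd h this
  simpa using mul_self_eq_zero.1 h2

lemma range_split (T : ℕ) (g : ℕ → Polynomial ℝ) :
    ∑ t ∈ Finset.range (T + 1), g t = g 0 + ∑ t ∈ Finset.Icc 1 T, g t := by
  have : Finset.range (T + 1) = insert 0 (Finset.Icc 1 T) := by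
    ext n
    simp [Finset.mem_range, Finset.mem_Icc, Finset.mem_insert]
    omega
  rw [this, Finset.sum_insert (by simp)]

/-- A polynomial-coefficient operator `S = Σ_{t=0}^T p_t ∂^t` satisfies
`E[S f(N)] = 0` for all polynomials `f` iff `p_0 = - Σ_{t=1}^T δ^t p_t`. -/
theorem PSO_iff_coefficient_condition (T : ℕ) (p : ℕ → Polynomial ℝ) :
    (∀ f : Polynomial ℝ,
        ∫ x : ℝ, (∑ t ∈ Finset.range (T + 1),
            (p t).eval x * ((derivative^[t] f).eval x)) * gaussDensity x = 0)
      ↔ p 0 = -∑ t ∈ Finset.Icc 1 T, deltaOp^[t] (p t) := by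
  set Q : Polynomial ℝ := ∑ t ∈ Finset.range (T + 1), deltaOp^[t] (p t) with hQ
  have hsplit : Q = p 0 + ∑ t ∈ Finset.Icc 1 T, deltaOp^[t] (p t) := by
    rw [hQ, range_split]
    simp
  constructor
  · intro h
    have hQ0 : Q = 0 := by
      apply poly_zero_of_integrals
      intro f
      rw [← key_transform T p f]
      exact h f
    rw [hQ0] at hsplit
    exact eq_neg_of_add_eq_zero_left hsplit.symm
  · intro h
    have hQ0 : Q = 0 := by
      rw [hsplit, h]
      ring
    intro f
    rw [key_transform T p f, ← hQ, hQ0]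
    simp
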